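/- Let G = ⟨a⟩₁₂ ⋊ ⟨b⟩ with a of order 12, b² ∈ ⟨a⟩, and a^b = a⁻⁵ = a⁷. If b² = 1 then G ≅ C₃ × D₈, and if b² = a⁶ then G ≅ C₃ × Q₈. -/

import Mathlib

section Aux

variable {G : Type*} [Group G] (a b : G)

private lemma key18 (ha : orderOf a = 12) {m n : ℕ} (h : m % 12 = n % 12) :
    a ^ m = a ^ n := by
  rw [pow_eq_pow_iff_modEq, ha]; exact h

private lemma comm18 (hab : b⁻¹ * a * b = a ^ 7) (m : ℕ) :
    a ^ m * b = b * a ^ (7 * m) := by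
  have h1 : a * b = b * a ^ 7 := by
    have := congrArg (fun x => b * x) hab
    simpa [mul_assoc] using this
  induction m with
  | zero => simp
  | succ k ih =>
    rw [pow_succ, mul_assoc, h1, ← mul_assoc, ih, mul_assoc, ← pow_add]
    ring_nf

private def dmap18 (a b : G) : Multiplicative (ZMod 3) → DihedralGroup 4 → G
  | m, .r i => a ^ (4 * (Multiplicative.toAdd m).val + 3 * i.val)
  | m, .sr i => b * a ^ (4 * (Multiplicative.toAdd m).val + 3 * i.val)

private def qmap18 (a b : G) : Multiplicative (ZMod 3) → QuaternionGroup 2 → G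
  | m, .a i => a ^ (4 * (Multiplicative.toAdd m).val + 3 * i.val)
  | m, .xa i => b * a ^ (4 * (Multiplicative.toAdd m).val + 3 * i.val)

end Aux

theorem stmt18 (G : Type*) [Group G] (a b : G)
    (ha : orderOf a = 12) (hab : b⁻¹ * a * b = a ^ 7)
    (hgen : Subgroup.closure {a, b} = ⊤) (hcard : Nat.card G = 24) :
    (b ^ 2 = 1 → Nonempty (G ≃* Multiplicative (ZMod 3) × DihedralGroup 4)) ∧
    (b ^ 2 = a ^ 6 → Nonempty (G ≃* Multiplicative (ZMod 3) × QuaternionGroup 2)) := by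
  have key := fun {m n : ℕ} (h : m % 12 = n % 12) => key18 a ha h
  have hcm := comm18 a b hab
  constructor
  · intro hb
    have hmul : ∀ p q : Multiplicative (ZMod 3) × DihedralGroup 4,
        dmap18 a b (p * q).1 (p * q).2 = dmap18 a b p.1 p.2 * dmap18 a b q.1 q.2 := by
      rintro ⟨m, i | i⟩ ⟨m', j | j⟩ <;>
        simp only [Prod.fst_mul, Prod.snd_mul, DihedralGroup.r_mul_r,
          DihedralGroup.r_mul_sr, DihedralGroup.sr_mul_r, DihedralGroup.sr_mul_sr,
          dmap18, toAdd_mul]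
      · rw [← pow_add]
        apply key
        have h1 := ZMod.val_lt (Multiplicative.toAdd m)
        have h2 := ZMod.val_lt (Multiplicative.toAdd m')
        rw [ZMod.val_add, ZMod.val_add]
        omega
      · rw [← mul_assoc, hcm, mul_assoc, ← pow_add]
        congr 1
        apply key
        have h1 := ZMod.val_lt i
        have h2 := ZMod.val_lt j
        rw [ZMod.val_add, sub_eq_add_neg, ZMod.val_add, ZMod.neg_val']
        omega
      · rw [mul_assoc, ← pow_add]
        congr 1
        apply key
        rw [ZMod.val_add, ZMod.val_add]
        omega
      · rw [mul_assoc, ← mul_assoc (a ^ _) b, hcm, ← mul_assoc, ← mul_assoc, ← sq, hb,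
          one_mul, ← pow_add]
        apply key
        have h1 := ZMod.val_lt i
        have h2 := ZMod.val_lt j
        rw [ZMod.val_add, sub_eq_add_neg, ZMod.val_add, ZMod.neg_val']
        omega
    let F : Multiplicative (ZMod 3) × DihedralGroup 4 →* G :=
      MonoidHom.mk' (fun p => dmap18 a b p.1 p.2) hmul
    have hsurj : Function.Surjective F := by
      have hma : a ∈ F.range := by
        refine ⟨(Multiplicative.ofAdd 1, .r 3), ?_⟩
        show a ^ (4 * (1 : ZMod 3).val + 3 * (3 : ZMod 4).val) = a
        rw [show (1 : ZMod 3).val = 1 from rfl, show (3 : ZMod 4).val = 3 from rfl]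
        calc a ^ (4 * 1 + 3 * 3) = a ^ 1 := key rfl
        _ = a := pow_one a
      have hmb : b ∈ F.range := ⟨(1, .sr 0), by simp [F, dmap18]⟩
      rw [MonoidHom.range_eq_top.symm, eq_top_iff, ← hgen, Subgroup.closure_le]
      rintro x (rfl | rfl)
      · exact hma
      · exact hmb
    have hbij : Function.Bijective F :=
      (Nat.bijective_iff_surjective_and_card F).mpr ⟨hsurj, by
        simp [Nat.card_prod, Nat.card_eq_fintype_card, DihedralGroup.card, Nat.card_zmod, hcard]⟩
    exact ⟨(MulEquiv.ofBijective F hbij).symm⟩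
  · intro hb
    have hmul : ∀ p q : Multiplicative (ZMod 3) × QuaternionGroup 2,
        qmap18 a b (p * q).1 (p * q).2 = qmap18 a b p.1 p.2 * qmap18 a b q.1 q.2 := by
      rintro ⟨m, i | i⟩ ⟨m', j | j⟩ <;>
        simp only [Prod.fst_mul, Prod.snd_mul, QuaternionGroup.a_mul_a,
          QuaternionGroup.a_mul_xa, QuaternionGroup.xa_mul_a, QuaternionGroup.xa_mul_xa,
          qmap18, toAdd_mul]
      · rw [← pow_add]
        apply key
        rw [ZMod.val_add, ZMod.val_add]
        omega
      · rw [← mul_assoc, hcm, mul_assoc, ← pow_add]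
        congr 1
        apply key
        have h1 := ZMod.val_lt i
        have h2 := ZMod.val_lt j
        rw [ZMod.val_add, sub_eq_add_neg, ZMod.val_add, ZMod.neg_val']
        omega
      · rw [mul_assoc, ← pow_add]
        congr 1
        apply key
        rw [ZMod.val_add, ZMod.val_add]
        omega
      · have hb2 : b * b = a ^ 6 := by rw [← hb, sq]
        rw [mul_assoc, ← mul_assoc (a ^ _) b, hcm, ← mul_assoc, ← mul_assoc, hb2,
          ← pow_add, ← pow_add]
        apply key
        have h1 := ZMod.val_lt i
        have h2 := ZMod.val_lt j
        rw [ZMod.val_add, sub_eq_add_neg, ZMod.val_add, ZMod.val_add, ZMod.neg_val',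
          ZMod.val_natCast]
        omega
    let F : Multiplicative (ZMod 3) × QuaternionGroup 2 →* G :=
      MonoidHom.mk' (fun p => qmap18 a b p.1 p.2) hmul
    have hsurj : Function.Surjective F := by
      have hma : a ∈ F.range := by
        refine ⟨(Multiplicative.ofAdd 1, .a 3), ?_⟩
        show a ^ (4 * (1 : ZMod 3).val + 3 * (3 : ZMod (2 * 2)).val) = a
        rw [show (1 : ZMod 3).val = 1 from rfl, show (3 : ZMod (2 * 2)).val = 3 from rfl]
        calc a ^ (4 * 1 + 3 * 3) = a ^ 1 := key rfl
        _ = a := pow_one a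
      have hmb : b ∈ F.range := ⟨(1, .xa 0), by simp [F, qmap18]⟩
      rw [MonoidHom.range_eq_top.symm, eq_top_iff, ← hgen, Subgroup.closure_le]
      rintro x (rfl | rfl)
      · exact hma
      · exact hmb
    have hbij : Function.Bijective F :=
      (Nat.bijective_iff_surjective_and_card F).mpr ⟨hsurj, by
        simp [Nat.card_prod, Nat.card_eq_fintype_card, QuaternionGroup.card,
          Nat.card_zmod, hcard]⟩
    exact ⟨(MulEquiv.ofBijective F hbij).symm⟩
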